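/- Let W := (ℤ/2ℤ)⁴. Given any three subgroups H₁, H₂, H₃ of W, each of cardinality 4, such that Hᵢ ∩ Hⱼ is trivial for all i ≠ j, there exist two further subgroups H₄, H₅ of W of cardinality 4 such that the five subgroups H₁, H₂, H₃, H₄, H₅ have pairwise trivial intersections. -/

import Mathlib

abbrev W := ZMod 2 × ZMod 2 × ZMod 2 × ZMod 2

def c0 : (Fin 2 → ZMod 2) ≃+ (Fin 2 → ZMod 2) where
  toFun f := ![f 1, f 0 + f 1]
  invFun f := ![f 0 + f 1, f 0]
  left_inv := by decide
  right_inv := by decide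
  map_add' := by decide

lemma c0_fpf : ∀ f, c0 f = f → f = 0 := by decide
lemma c0_fpf2 : ∀ f, c0 (c0 f) = f → f = 0 := by decide

lemma eq_zero_of_apply_eq_zero {A B : Type*} [AddGroup A] [AddGroup B]
    (ψ : A ≃+ B) {a : A} (h : ψ a = 0) : a = 0 := by
  apply ψ.injective; rw [h, map_zero]

lemma exists_fpf_auto (H : AddSubgroup W) (h : Nat.card H = 4) :
    ∃ c : H ≃+ H, (∀ x, c x = x → x = 0) ∧ (∀ x, c (c x) = x → x = 0) := by
  set K : Submodule (ZMod 2) W := AddSubgroup.toZModSubmodule 2 H with hK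
  haveI : Fintype K := Fintype.ofFinite K
  have hcard : Fintype.card K = 4 := by
    rw [← Nat.card_eq_fintype_card]; exact h
  have hr : Module.finrank (ZMod 2) K = 2 := by
    have h2 := Module.card_eq_pow_finrank (K := ZMod 2) (V := K)
    rw [hcard, ZMod.card] at h2
    have : (2:ℕ) ^ 2 = 2 ^ Module.finrank (ZMod 2) K := by rw [← h2]; norm_num
    exact (Nat.pow_right_injective (le_refl 2) this).symm
  let b : Module.Basis (Fin 2) (ZMod 2) K := Module.finBasisOfFinrankEq _ _ hr
  let eA : H ≃+ (Fin 2 → ZMod 2) := b.equivFun.toAddEquiv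
  refine ⟨eA.trans (c0.trans eA.symm), ?_, ?_⟩
  · intro x hx
    simp only [AddEquiv.trans_apply] at hx
    have : c0 (eA x) = eA x := by
      have := congrArg eA hx
      simpa using this
    have h0 := c0_fpf _ this
    have := congrArg eA.symm h0
    simpa using this
  · intro x hx
    simp only [AddEquiv.trans_apply] at hx
    simp only [AddEquiv.apply_symm_apply] at hx
    have : c0 (c0 (eA x)) = eA x := by
      have := congrArg eA hx
      simpa using this
    have h0 := c0_fpf2 _ this
    have := congrArg eA.symm h0
    simpa using this

set_option synthInstance.maxHeartbeats 400000 in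
/-- Given three subgroups of order `4` of `W = (ℤ/2ℤ)⁴` with pairwise trivial
intersections, there exist two further subgroups of order `4` such that all five
subgroups have pairwise trivial intersections. -/
theorem exists_two_more_order_four_subgroups
    (H₁ H₂ H₃ : AddSubgroup (ZMod 2 × ZMod 2 × ZMod 2 × ZMod 2))
    (h₁ : Nat.card H₁ = 4) (h₂ : Nat.card H₂ = 4) (h₃ : Nat.card H₃ = 4)
    (h₁₂ : H₁ ⊓ H₂ = ⊥) (h₁₃ : H₁ ⊓ H₃ = ⊥) (h₂₃ : H₂ ⊓ H₃ = ⊥) :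
    ∃ H₄ H₅ : AddSubgroup (ZMod 2 × ZMod 2 × ZMod 2 × ZMod 2),
      Nat.card H₄ = 4 ∧ Nat.card H₅ = 4 ∧
      H₁ ⊓ H₄ = ⊥ ∧ H₂ ⊓ H₄ = ⊥ ∧ H₃ ⊓ H₄ = ⊥ ∧
      H₁ ⊓ H₅ = ⊥ ∧ H₂ ⊓ H₅ = ⊥ ∧ H₃ ⊓ H₅ = ⊥ ∧ H₄ ⊓ H₅ = ⊥ := by
  classical
  have hWcard : Nat.card W = 16 := by
    simp [Nat.card_eq_fintype_card]
  -- the addition map H₁ × H₂ → W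
  let f : H₁ × H₂ →+ W := AddMonoidHom.mk' (fun p => (p.1 : W) + (p.2 : W))
    (by intro p q; simp only [Prod.fst_add, Prod.snd_add, AddSubgroup.coe_add]; exact add_add_add_comm _ _ _ _)
  have hfinj : Function.Injective f := by
    rw [injective_iff_map_eq_zero]
    rintro ⟨a, b⟩ hab
    have hab' : (a : W) + (b : W) = 0 := hab
    have ha : (a : W) ∈ H₁ ⊓ H₂ := by
      refine ⟨a.2, ?_⟩
      rw [eq_neg_of_add_eq_zero_left hab']
      exact H₂.neg_mem b.2
    rw [h₁₂, AddSubgroup.mem_bot] at ha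
    have hb : (b : W) = 0 := by rwa [ha, zero_add] at hab'
    exact Prod.ext (Subtype.ext ha) (Subtype.ext hb)
  have hfbij : Function.Bijective f := by
    refine (Nat.bijective_iff_injective_and_card f).mpr ⟨hfinj, ?_⟩
    rw [Nat.card_prod, h₁, h₂, hWcard]
  let e : H₁ × H₂ ≃+ W := AddEquiv.ofBijective f hfbij
  have key : ∀ w : W, ((e.symm w).1 : W) + ((e.symm w).2 : W) = w := fun w =>
    e.apply_symm_apply w
  -- projections restricted to H₃
  let q₁ : H₃ →+ H₁ := (AddMonoidHom.fst H₁ H₂).comp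
    ((AddEquiv.toAddMonoidHom e.symm).comp H₃.subtype)
  let q₂ : H₃ →+ H₂ := (AddMonoidHom.snd H₁ H₂).comp
    ((AddEquiv.toAddMonoidHom e.symm).comp H₃.subtype)
  have hq₁inj : Function.Injective q₁ := by
    rw [injective_iff_map_eq_zero]
    intro t ht
    have h0 : ((e.symm (t : W)).1 : W) = 0 := congrArg Subtype.val ht
    have hmem : (t : W) ∈ H₂ ⊓ H₃ := by
      refine ⟨?_, t.2⟩
      have := key (t : W)
      rw [h0, zero_add] at this
      rw [← this]
      exact (e.symm (t : W)).2.2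
    rw [h₂₃, AddSubgroup.mem_bot] at hmem
    exact Subtype.ext hmem
  have hq₂inj : Function.Injective q₂ := by
    rw [injective_iff_map_eq_zero]
    intro t ht
    have h0 : ((e.symm (t : W)).2 : W) = 0 := congrArg Subtype.val ht
    have hmem : (t : W) ∈ H₁ ⊓ H₃ := by
      refine ⟨?_, t.2⟩
      have := key (t : W)
      rw [h0, add_zero] at this
      rw [← this]
      exact (e.symm (t : W)).1.2
    rw [h₁₃, AddSubgroup.mem_bot] at hmem
    exact Subtype.ext hmem
  have hq₁bij : Function.Bijective q₁ :=
    (Nat.bijective_iff_injective_and_card q₁).mpr ⟨hq₁inj, by rw [h₃, h₁]⟩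
  have hq₂bij : Function.Bijective q₂ :=
    (Nat.bijective_iff_injective_and_card q₂).mpr ⟨hq₂inj, by rw [h₃, h₂]⟩
  let g₁ : H₃ ≃+ H₁ := AddEquiv.ofBijective q₁ hq₁bij
  let g₂ : H₃ ≃+ H₂ := AddEquiv.ofBijective q₂ hq₂bij
  let φ : H₁ ≃+ H₂ := g₁.symm.trans g₂
  have hgraphB : ∀ a : H₁, (a : W) + (φ a : W) ∈ H₃ := by
    intro a
    have h2 : (a : W) = ((e.symm ((g₁.symm a : H₃) : W)).1 : W) := by
      conv_lhs => rw [← g₁.apply_symm_apply a]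
      rfl
    have h1 : (φ a : W) = ((e.symm ((g₁.symm a : H₃) : W)).2 : W) := rfl
    rw [h1, h2, key]
    exact (g₁.symm a).2
  have hgraphF : ∀ w ∈ H₃, ∃ a : H₁, (a : W) + (φ a : W) = w := by
    intro w hw
    refine ⟨g₁ ⟨w, hw⟩, ?_⟩
    have h1 : φ (g₁ ⟨w, hw⟩) = g₂ ⟨w, hw⟩ := by
      show g₂ (g₁.symm (g₁ ⟨w, hw⟩)) = g₂ ⟨w, hw⟩
      rw [g₁.symm_apply_apply]
    rw [h1]
    exact key w
  -- fixed-point-free automorphism of H₂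
  obtain ⟨c, hc1, hc2⟩ := exists_fpf_auto H₂ h₂
  -- graphs of isomorphisms H₁ ≃+ H₂ as subgroups of W
  let mk : (H₁ ≃+ H₂) → (H₁ →+ W) := fun ψ => AddMonoidHom.mk'
    (fun a => (a : W) + (ψ a : W))
    (by intro a b
        show ((a + b : H₁) : W) + ((ψ (a + b) : H₂) : W) =
          ((a : W) + (ψ a : W)) + ((b : W) + (ψ b : W))
        rw [ψ.map_add, AddSubgroup.coe_add, AddSubgroup.coe_add]
        exact add_add_add_comm _ _ _ _)
  have hmkinj : ∀ ψ : H₁ ≃+ H₂, Function.Injective (mk ψ) := by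
    intro ψ
    rw [injective_iff_map_eq_zero]
    intro a ha
    have ha' : (a : W) + (ψ a : W) = 0 := ha
    have hm : (a : W) ∈ H₁ ⊓ H₂ := by
      refine ⟨a.2, ?_⟩
      rw [eq_neg_of_add_eq_zero_left ha']
      exact H₂.neg_mem (ψ a).2
    rw [h₁₂, AddSubgroup.mem_bot] at hm
    exact Subtype.ext hm
  have hJcard : ∀ ψ : H₁ ≃+ H₂, Nat.card (mk ψ).range = 4 := by
    intro ψ
    rw [← h₁]
    exact (Nat.card_congr (AddMonoidHom.ofInjective (hmkinj ψ)).toEquiv).symm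
  have hJ1 : ∀ ψ : H₁ ≃+ H₂, H₁ ⊓ (mk ψ).range = ⊥ := by
    intro ψ
    rw [eq_bot_iff]
    rintro w ⟨hw1, a, rfl⟩
    have h0 : (ψ a : W) ∈ H₁ ⊓ H₂ := by
      refine ⟨?_, (ψ a).2⟩
      have : (ψ a : W) = ((a : W) + (ψ a : W)) - (a : W) := by abel
      rw [this]
      exact H₁.sub_mem hw1 a.2
    rw [h₁₂, AddSubgroup.mem_bot] at h0
    have ha : a = 0 := eq_zero_of_apply_eq_zero ψ (Subtype.ext (by simp [h0]))
    rw [AddSubgroup.mem_bot]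
    show (a : W) + (ψ a : W) = 0
    rw [ha, ψ.map_zero]; simp
  have hJ2 : ∀ ψ : H₁ ≃+ H₂, H₂ ⊓ (mk ψ).range = ⊥ := by
    intro ψ
    rw [eq_bot_iff]
    rintro w ⟨hw1, a, rfl⟩
    have h0 : (a : W) ∈ H₁ ⊓ H₂ := by
      refine ⟨a.2, ?_⟩
      have : (a : W) = ((a : W) + (ψ a : W)) - (ψ a : W) := by abel
      rw [this]
      exact H₂.sub_mem hw1 (ψ a).2
    rw [h₁₂, AddSubgroup.mem_bot] at h0
    have ha : a = 0 := Subtype.ext h0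
    rw [AddSubgroup.mem_bot]
    show (a : W) + (ψ a : W) = 0
    rw [ha, ψ.map_zero]; simp
  have hJJ : ∀ ψ ψ' : H₁ ≃+ H₂, (∀ a, ψ a = ψ' a → a = 0) →
      (mk ψ).range ⊓ (mk ψ').range = ⊥ := by
    intro ψ ψ' hd
    rw [eq_bot_iff]
    rintro w ⟨⟨a, rfl⟩, a', ha'⟩
    have ha'' : (a' : W) + (ψ' a' : W) = (a : W) + (ψ a : W) := ha'
    have hdiff : ((a : W) - (a' : W)) ∈ H₁ ⊓ H₂ := by
      constructor
      · exact H₁.sub_mem a.2 a'.2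
      · have : (a : W) - (a' : W) = (ψ' a' : W) - (ψ a : W) := by
          rw [sub_eq_sub_iff_add_eq_add, ← ha'']
          exact add_comm _ _
        rw [this]
        exact H₂.sub_mem (ψ' a').2 (ψ a).2
    rw [h₁₂, AddSubgroup.mem_bot, sub_eq_zero] at hdiff
    have haa : a = a' := Subtype.ext hdiff
    have hpsi : (ψ a : W) = (ψ' a : W) := by
      have := ha''
      rw [← haa] at this
      exact (add_left_cancel this).symm
    have ha0 : a = 0 := hd a (Subtype.ext hpsi)
    rw [AddSubgroup.mem_bot]
    show (a : W) + (ψ a : W) = 0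
    rw [ha0, ψ.map_zero]; simp
  have hH₃ : H₃ = (mk φ).range := by
    apply le_antisymm
    · intro w hw
      obtain ⟨a, ha⟩ := hgraphF w hw
      exact ⟨a, ha⟩
    · rintro w ⟨a, rfl⟩
      exact hgraphB a
  refine ⟨(mk (φ.trans c)).range, (mk (φ.trans (c.trans c))).range,
    hJcard _, hJcard _, hJ1 _, hJ2 _, ?_, hJ1 _, hJ2 _, ?_, ?_⟩
  · rw [hH₃]
    refine hJJ _ _ ?_
    intro a ha
    simp only [AddEquiv.trans_apply] at ha
    have h0 : φ a = 0 := hc1 _ ha.symm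
    exact eq_zero_of_apply_eq_zero φ h0
  · rw [hH₃]
    refine hJJ _ _ ?_
    intro a ha
    simp only [AddEquiv.trans_apply] at ha
    have h0 : φ a = 0 := hc2 _ ha.symm
    exact eq_zero_of_apply_eq_zero φ h0
  · refine hJJ _ _ ?_
    intro a ha
    simp only [AddEquiv.trans_apply] at ha
    have h1 : φ a = c (φ a) := c.injective ha
    have h0 : φ a = 0 := hc1 _ h1.symm
    exact eq_zero_of_apply_eq_zero φ h0
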